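/- arXiv:2406.14339 — 6 statements merged into one kernel-verified Lean document; each statement's English description precedes it below -/
import Mathlib

section
/- Let F be a field of characteristic 2 and let x, y, a, b ∈ F with b ≠ 0 and x² + b·y² ≠ 0. Then there exists c ∈ F such that the quadratic 2-fold Pfister form ⟨⟨x² + b·y², a]] is isometric to ⟨⟨b, c]]. -/
open scoped TensorProduct

universe u

noncomputable section

/-- The binary quadratic form `[a,b] : aX² + XY + bY²`. -/
def binQF (R : Type u) [CommRing R] (a b : R) : QuadraticForm R (R × R) :=
  LinearMap.BilinMap.toQuadraticMap <| LinearMap.mk₂ R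
    (fun x y => a * x.1 * y.1 + x.1 * y.2 + b * x.2 * y.2)
    (by intros; simp; ring) (by intros; simp; ring)
    (by intros; simp; ring) (by intros; simp; ring)

/-- The quadratic form associated to an `n × n` coefficient matrix:
`Q(x) = ∑ p q, c p q * x p * x q`. Every finite-dimensional quadratic form over a field
arises this way after a choice of basis. -/
def coeffQF (R : Type u) [CommRing R] {n : ℕ} (c : Fin n → Fin n → R) :
    QuadraticForm R (Fin n → R) :=
  LinearMap.BilinMap.toQuadraticMap <| LinearMap.mk₂ R
    (fun x y => ∑ p, ∑ q, c p q * x p * y q)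
    (by intros; simp [add_mul, mul_add, Finset.sum_add_distrib])
    (by intros; simp [Finset.mul_sum]; congr 1; ext p; congr 1; ext q; ring)
    (by intros; simp [mul_add, Finset.sum_add_distrib])
    (by intros; simp [Finset.mul_sum]; congr 1; ext p; congr 1; ext q; ring)

/-- The quadratic 2-fold Pfister form `⟨⟨u,v]] = [1,v] ⊥ u·[1,v]`. -/
def pf2 (R : Type u) [CommRing R] (u v : R) : QuadraticForm R ((R × R) × (R × R)) :=
  (binQF R 1 v).prod (u • binQF R 1 v)

/-- The orthogonal sum of `k` hyperbolic planes `[0,0]`. -/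
def hyps (R : Type u) [CommRing R] (k : ℕ) : QuadraticForm R (Fin k → R × R) :=
  QuadraticMap.pi fun _ => binQF R 0 0

/-- Witt equivalence of quadratic forms: the forms become isometric after adding
hyperbolic planes. -/
def WittEq (R : Type u) [CommRing R] {V W : Type u} [AddCommGroup V] [Module R V]
    [AddCommGroup W] [Module R W] (Q₁ : QuadraticForm R V) (Q₂ : QuadraticForm R W) : Prop :=
  ∃ k l : ℕ, (Q₁.prod (hyps R k)).Equivalent (Q₂.prod (hyps R l))

/-- The `F`-algebra `A` is split, i.e. isomorphic to a matrix algebra over `F`. -/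
def IsSplitAlg (F A : Type u) [Field F] [Ring A] [Algebra F A] : Prop :=
  ∃ n : ℕ, 0 < n ∧ Nonempty (A ≃ₐ[F] Matrix (Fin n) (Fin n) F)

/-- Brauer equivalence of `F`-algebras. -/
def BrEq (F A B : Type u) [Field F] [Ring A] [Algebra F A] [Ring B] [Algebra F B] : Prop :=
  ∃ n m : ℕ, 0 < n ∧ 0 < m ∧
    Nonempty (Matrix (Fin n) (Fin n) A ≃ₐ[F] Matrix (Fin m) (Fin m) B)

/-- `A` is the quaternion `F`-algebra `[a,b)_F` (characteristic 2 presentation):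
`A` is `4`-dimensional, generated by `i, j` with `i² + i = a`, `j² = b`, `ji = (1+i)j`. -/
def IsQuatAlg (F A : Type u) [Field F] [Ring A] [Algebra F A] (a b : F) : Prop :=
  Module.finrank F A = 4 ∧ ∃ i j : A,
    i * i + i = algebraMap F A a ∧ j * j = algebraMap F A b ∧ j * i = (1 + i) * j ∧
    Algebra.adjoin F {i, j} = ⊤

/-- `A` is Brauer equivalent to a tensor product of exactly `m` quaternion `F`-algebras. -/
def TensorRepLen (F : Type u) [Field F] (A : Type u) [Ring A] [Algebra F A] (m : ℕ) : Prop :=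
  ∃ Q : Fin m → AlgCat.{u} F, (∀ k, ∃ a b : F, IsQuatAlg F (Q k) a b) ∧
    BrEq F A (⨂[F] k, (Q k))

/-- The 2-symbol length of `A` is at most `m`. -/
def SymLenLe (F : Type u) [Field F] (A : Type u) [Ring A] [Algebra F A] (m : ℕ) : Prop :=
  ∃ j ≤ m, TensorRepLen F A j

/-- The Scharlau transfer of a quadratic form along an `F`-linear functional `s : K → F`. -/
def transferQF {F K V : Type u} [Field F] [Field K] [Algebra F K]
    [AddCommGroup V] [Module K V] [Module F V] [IsScalarTower F K V]
    (s : K →ₗ[F] F) (φ : QuadraticForm K V) : QuadraticForm F V where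
  toFun v := s (φ v)
  toFun_smul a v := by
    show s (φ (a • v)) = (a * a) • s (φ v)
    rw [show a • v = (algebraMap F K a) • v from algebra_compatible_smul K a v,
      QuadraticMap.map_smul, smul_eq_mul, ← map_mul, ← Algebra.smul_def,
      map_smul, smul_eq_mul]
  exists_companion' := by
    obtain ⟨B, hB⟩ := φ.exists_companion
    refine ⟨LinearMap.mk₂ F (fun u v => s (B u v)) (fun x y z => by simp)
      (fun c x y => by
        show s (B (c • x) y) = c • s (B x y)
        rw [show c • x = (algebraMap F K c) • x from algebra_compatible_smul K c x,
          map_smul, LinearMap.smul_apply, smul_eq_mul, ← Algebra.smul_def, map_smul,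
          smul_eq_mul])
      (fun x y z => by simp)
      (fun c x y => by
        show s (B x (c • y)) = c • s (B x y)
        rw [show c • y = (algebraMap F K c) • y from algebra_compatible_smul K c y,
          map_smul, smul_eq_mul, ← Algebra.smul_def, map_smul, smul_eq_mul]),
      fun x y => by simp [hB]⟩

end

noncomputable section StmtZeroAux

variable {F : Type u} [Field F]

lemma pf2_apply (u v : F) (z : (F × F) × (F × F)) :
    pf2 F u v z = (z.1.1^2 + z.1.1*z.1.2 + v*z.1.2^2)
      + u*(z.2.1^2 + z.2.1*z.2.2 + v*z.2.2^2) := by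
  simp [pf2, binQF, QuadraticMap.prod_apply, LinearMap.BilinMap.toQuadraticMap_apply]
  ring

def lmap4 (m11 m12 m13 m14 m21 m22 m23 m24 m31 m32 m33 m34 m41 m42 m43 m44 : F) :
    ((F × F) × (F × F)) →ₗ[F] ((F × F) × (F × F)) where
  toFun z := ((m11*z.1.1 + m12*z.1.2 + m13*z.2.1 + m14*z.2.2,
               m21*z.1.1 + m22*z.1.2 + m23*z.2.1 + m24*z.2.2),
              (m31*z.1.1 + m32*z.1.2 + m33*z.2.1 + m34*z.2.2,
               m41*z.1.1 + m42*z.1.2 + m43*z.2.1 + m44*z.2.2))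
  map_add' z w := by
    refine Prod.ext (Prod.ext ?_ ?_) (Prod.ext ?_ ?_) <;> (simp; ring)
  map_smul' c z := by
    refine Prod.ext (Prod.ext ?_ ?_) (Prod.ext ?_ ?_) <;> (simp; ring)

lemma lmap4_apply (m11 m12 m13 m14 m21 m22 m23 m24 m31 m32 m33 m34 m41 m42 m43 m44 : F)
    (z : (F × F) × (F × F)) :
    lmap4 m11 m12 m13 m14 m21 m22 m23 m24 m31 m32 m33 m34 m41 m42 m43 m44 z
    = ((m11*z.1.1 + m12*z.1.2 + m13*z.2.1 + m14*z.2.2,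
        m21*z.1.1 + m22*z.1.2 + m23*z.2.1 + m24*z.2.2),
       (m31*z.1.1 + m32*z.1.2 + m33*z.2.1 + m34*z.2.2,
        m41*z.1.1 + m42*z.1.2 + m43*z.2.1 + m44*z.2.2)) := rfl


end StmtZeroAux

set_option maxHeartbeats 1600000

/-- If `b ≠ 0` and `x² + by² ≠ 0` in a field `F` of characteristic 2, then
`⟨⟨x² + by², a]] ≅ ⟨⟨b, c]]` for some `c ∈ F`. -/
theorem stmt_0 (F : Type u) [Field F] [CharP F 2] (x y a b : F) (hb : b ≠ 0)
    (hxy : x ^ 2 + b * y ^ 2 ≠ 0) :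
    ∃ c : F, (pf2 F (x ^ 2 + b * y ^ 2) a).Equivalent (pf2 F b c) := by
  have h2 : (2 : F) = 0 := by
    have := CharP.cast_eq_zero F 2; exact_mod_cast this
  have hib : b * b⁻¹ = 1 := mul_inv_cancel₀ hb
  by_cases hy : y = 0
  · -- u = x^2
    have hx : x ≠ 0 := by
      intro h; apply hxy; rw [h, hy]; ring
    have comp1 : (lmap4 (F := F) 1 0 (a+b) b  0 1 0 0  0 0 ((a+b)/x) (b/x)  0 (1/x) (1/x) 0).comp
        (lmap4 1 0 (-x) 0  0 1 0 0  0 (-1) 0 x  0 ((a+b)/b) (x/b) (-((a+b)*x/b))) = LinearMap.id := by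
      apply LinearMap.ext; intro z
      simp only [LinearMap.comp_apply, lmap4_apply, LinearMap.id_apply]
      refine Prod.ext (Prod.ext ?_ ?_) (Prod.ext ?_ ?_) <;> (dsimp only; field_simp; try ring)
    have comp2 : (lmap4 (F := F) 1 0 (-x) 0  0 1 0 0  0 (-1) 0 x  0 ((a+b)/b) (x/b) (-((a+b)*x/b))).comp
        (lmap4 1 0 (a+b) b  0 1 0 0  0 0 ((a+b)/x) (b/x)  0 (1/x) (1/x) 0) = LinearMap.id := by
      apply LinearMap.ext; intro z
      simp only [LinearMap.comp_apply, lmap4_apply, LinearMap.id_apply]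
      refine Prod.ext (Prod.ext ?_ ?_) (Prod.ext ?_ ?_) <;> (dsimp only; field_simp; try ring)
    have key : ∀ z, pf2 F b 0
        ((lmap4 (F := F) 1 0 (-x) 0  0 1 0 0  0 (-1) 0 x  0 ((a+b)/b) (x/b) (-((a+b)*x/b))) z)
        = pf2 F (x ^ 2 + b * y ^ 2) a z := by
      intro z
      obtain ⟨⟨P1, P2⟩, Q1, Q2⟩ := z
      rw [lmap4_apply, pf2_apply, pf2_apply]
      dsimp only
      rw [hy]
      simp only [div_eq_mul_inv, mul_inv]
      linear_combination (norm := ring1) ((-1)*Q2^2*x^2*b + (-1)*Q2^2*x^2*a + Q1*Q2*x^2 + (2)*P2*Q2*x*b + (2)*P2*Q2*x*a + (-1)*P2*Q1*x + (-1)*P2^2*b + (-1)*P2^2*a) * hib + ((-1)*Q2^2*x^2*a + P2*Q2*x*a + (-1)*P2*Q1*x + (-1)*P2^2*a + (-1)*P1*Q1*x) * h2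
    exact ⟨0, ⟨{ toLinearEquiv := LinearEquiv.ofLinear _ _ comp2 comp1, map_app' := key }⟩⟩
  · -- y ≠ 0
    have hiy : y * y⁻¹ = 1 := mul_inv_cancel₀ hy
    have hiu : (x^2+b*y^2) * (x^2+b*y^2)⁻¹ = 1 := mul_inv_cancel₀ (by exact_mod_cast hxy)
    have comp1 : (lmap4 (F := F) 1 0 (x/y) 0  0 1 0 0  0 0 (1/y) 0
          0 (x/(x ^ 2 + b * y ^ 2)) 0 (b*y/(x ^ 2 + b * y ^ 2))).comp
        (lmap4 1 0 (-x) 0  0 1 0 0  0 0 y 0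
          0 (-(x/(b*y))) 0 ((x ^ 2 + b * y ^ 2)/(b*y))) = LinearMap.id := by
      apply LinearMap.ext; intro z
      simp only [LinearMap.comp_apply, lmap4_apply, LinearMap.id_apply]
      refine Prod.ext (Prod.ext ?_ ?_) (Prod.ext ?_ ?_)
      · dsimp only; field_simp; try ring
      · dsimp only; field_simp; try ring
      · dsimp only; field_simp; try ring
      · dsimp only
        simp only [div_eq_mul_inv, mul_inv]
        linear_combination (norm := ring1)
          (z.2.2*y^3*b*(x^2+b*y^2)⁻¹*y⁻¹ + z.2.2*x^2*y*(x^2+b*y^2)⁻¹*y⁻¹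
            + (-1)*z.1.2*x*y*(x^2+b*y^2)⁻¹*y⁻¹) * hib
          + (z.2.2*y^2*b*(x^2+b*y^2)⁻¹ + z.2.2*x^2*(x^2+b*y^2)⁻¹
            + (-1)*z.1.2*x*(x^2+b*y^2)⁻¹) * hiy
          + (z.2.2) * hiu
    have comp2 : (lmap4 (F := F) 1 0 (-x) 0  0 1 0 0  0 0 y 0
          0 (-(x/(b*y))) 0 ((x ^ 2 + b * y ^ 2)/(b*y))).comp
        (lmap4 1 0 (x/y) 0  0 1 0 0  0 0 (1/y) 0
          0 (x/(x ^ 2 + b * y ^ 2)) 0 (b*y/(x ^ 2 + b * y ^ 2))) = LinearMap.id := by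
      apply LinearMap.ext; intro z
      simp only [LinearMap.comp_apply, lmap4_apply, LinearMap.id_apply]
      refine Prod.ext (Prod.ext ?_ ?_) (Prod.ext ?_ ?_) <;> (dsimp only; field_simp; try ring)
      have hD : (y ^ 2 * b + x ^ 2) * (y ^ 2 * b + x ^ 2)⁻¹ = 1 := mul_inv_cancel₀ (by intro h; apply hxy; linear_combination h)
      linear_combination (norm := ring1) (z.1.2 * x + y * z.2.2 * b) * hD
    have key : ∀ z, pf2 F b (a*b*y^2/(x ^ 2 + b * y ^ 2))
        ((lmap4 (F := F) 1 0 (-x) 0  0 1 0 0  0 0 y 0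
          0 (-(x/(b*y))) 0 ((x ^ 2 + b * y ^ 2)/(b*y))) z)
        = pf2 F (x ^ 2 + b * y ^ 2) a z := by
      intro z
      obtain ⟨⟨P1, P2⟩, Q1, Q2⟩ := z
      rw [lmap4_apply, pf2_apply, pf2_apply]
      dsimp only
      simp only [div_eq_mul_inv, mul_inv]
      linear_combination (norm := ring1) (Q2^2*y^2*a*b^2*(x^2+b*y^2)*b⁻¹^2*y⁻¹^2 + (-2)*P2*Q2*x*y^2*a*b^2*b⁻¹^2*y⁻¹^2 + P2^2*a) * hiu + (Q2^2*y^2*a*(x^2+b*y^2)*y⁻¹^2 + Q2^2*y^2*a*b*(x^2+b*y^2)*b⁻¹*y⁻¹^2 + Q1*Q2*y*(x^2+b*y^2)*y⁻¹ + (-2)*P2*Q2*x*y^2*a*y⁻¹^2 + (-2)*P2*Q2*x*y^2*a*b*b⁻¹*y⁻¹^2 + (-1)*P2*Q1*x*y*y⁻¹ + P2^2*x^2*y^2*a*(x^2+b*y^2)⁻¹*y⁻¹^2 + P2^2*x^2*y^2*a*b*(x^2+b*y^2)⁻¹*b⁻¹*y⁻¹^2) * hib + (Q2^2*a*(x^2+b*y^2)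 + Q2^2*y*a*(x^2+b*y^2)*y⁻¹ + Q1*Q2*(x^2+b*y^2) + (-2)*P2*Q2*x*a + (-2)*P2*Q2*x*y*a*y⁻¹ + (-1)*P2*Q1*x + P2^2*x^2*a*(x^2+b*y^2)⁻¹ + P2^2*x^2*y*a*(x^2+b*y^2)⁻¹*y⁻¹) * hiy + ((-1)*P2*Q2*x*a + (-1)*P2*Q1*x + (-1)*P1*Q1*x) * h2
    exact ⟨a*b*y^2/(x ^ 2 + b * y ^ 2), ⟨{ toLinearEquiv := LinearEquiv.ofLinear _ _ comp2 comp1, map_app' := key }⟩⟩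
end

section
/- Let F be a field of characteristic 2, let K/F be a purely inseparable quadratic extension with K² ⊆ F, and let x ∈ K, y ∈ K^×. Then the image of the quaternion algebra [x, y)_K under the Frobenius transfer Frob_{K/F} is Brauer equivalent to [x², y²)_F. -/
open scoped TensorProduct

universe u

section quatAux

variable {F : Type u} {A : Type u} [Field F] [Ring A] [Algebra F A]

lemma qt1 {a : F} {i : A} (hi : i * i + i = algebraMap F A a) :
    i * i = a • (1:A) - i :=
  eq_sub_iff_add_eq.mpr (by rw [hi, Algebra.algebraMap_eq_smul_one])

lemma qt2 {b : F} {j : A} (hj : j * j = algebraMap F A b) :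
    j * j = b • (1:A) := by rw [hj, Algebra.algebraMap_eq_smul_one]

lemma qt3 {i j : A} (hc : j * i = (1 + i) * j) : j * i = j + i * j := by
  rw [hc, add_mul, one_mul]

lemma qt4 {a : F} {i j : A} (hi : i * i + i = algebraMap F A a) :
    i * (i * j) = a • j - i * j := by
  rw [← mul_assoc, qt1 hi, sub_mul, smul_mul_assoc, one_mul]

lemma qt5 {b : F} {i j : A} (hj : j * j = algebraMap F A b)
    (hc : j * i = (1 + i) * j) :
    j * (i * j) = b • (1:A) + b • i := by
  rw [← mul_assoc, qt3 hc, add_mul, qt2 hj, mul_assoc, qt2 hj, mul_smul_comm, mul_one]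

lemma qt6 {a : F} {i j : A} (hi : i * i + i = algebraMap F A a)
    (hc : j * i = (1 + i) * j) :
    (i * j) * i = a • j := by
  rw [mul_assoc, qt3 hc, mul_add, qt4 hi]
  module

lemma qt7 {b : F} {i j : A} (hj : j * j = algebraMap F A b) :
    (i * j) * j = b • i := by
  rw [mul_assoc, qt2 hj, mul_smul_comm, mul_one]

lemma qt8 {a b : F} {i j : A} (hi : i * i + i = algebraMap F A a)
    (hj : j * j = algebraMap F A b) (hc : j * i = (1 + i) * j) :
    (i * j) * (i * j) = (a * b) • (1:A) := by
  rw [mul_assoc, qt5 hj hc, mul_add, mul_smul_comm, mul_one, mul_smul_comm, qt1 hi,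
    smul_sub, smul_smul, mul_comm b a]
  module

lemma quat_span {a b : F} {i j : A}
    (hi : i * i + i = algebraMap F A a) (hj : j * j = algebraMap F A b)
    (hc : j * i = (1 + i) * j) (hadj : Algebra.adjoin F {i, j} = ⊤) :
    Submodule.span F (Set.range ![(1:A), i, j, i * j]) = ⊤ := by
  set S := Submodule.span F (Set.range ![(1:A), i, j, i * j]) with hS
  have m1 : (1:A) ∈ S := Submodule.subset_span ⟨0, rfl⟩
  have mi : i ∈ S := Submodule.subset_span ⟨1, rfl⟩
  have mj : j ∈ S := Submodule.subset_span ⟨2, rfl⟩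
  have mij : i * j ∈ S := Submodule.subset_span ⟨3, rfl⟩
  have hmul : ∀ z w : A, z ∈ S → w ∈ S → z * w ∈ S := by
    have key : S * S ≤ S := by
      rw [hS, Submodule.span_mul_span]
      refine Submodule.span_le.mpr ?_
      have hset : Set.range ![(1:A), i, j, i * j] = {(1:A), i, j, i * j} := by
        ext z
        simp [Matrix.range_cons, Matrix.range_cons_empty]
        tauto
      rintro u hu
      rw [Set.mem_mul] at hu
      obtain ⟨p, hp, q, hq, rfl⟩ := hu
      rw [hset, Set.mem_insert_iff, Set.mem_insert_iff, Set.mem_insert_iff,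
        Set.mem_singleton_iff] at hp hq
      rcases hp with rfl|rfl|rfl|rfl <;> rcases hq with rfl|rfl|rfl|rfl <;>
        simp only [one_mul, mul_one, SetLike.mem_coe,
          qt1 hi, qt2 hj, qt3 hc, qt4 hi, qt5 hj hc, qt6 hi hc, qt7 hj, qt8 hi hj hc] <;>
        first
          | exact m1 | exact mi | exact mj | exact mij
          | exact Submodule.smul_mem _ _ m1
          | exact Submodule.smul_mem _ _ mi
          | exact Submodule.smul_mem _ _ mj
          | exact sub_mem (Submodule.smul_mem _ _ m1) mi
          | exact add_mem mj mij
          | exact sub_mem (Submodule.smul_mem _ _ mj) mij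
          | exact add_mem (Submodule.smul_mem _ _ m1) (Submodule.smul_mem _ _ mi)
    intro z w hz hw
    exact key (Submodule.mul_mem_mul hz hw)
  have hle : (⊤ : Subalgebra F A) ≤ S.toSubalgebra m1 hmul := by
    rw [← hadj]
    refine Algebra.adjoin_le ?_
    rintro z (rfl | rfl)
    · exact mi
    · exact mj
  rw [eq_top_iff]
  intro z _
  exact hle (Algebra.mem_top (x := z))

lemma quat_iso {A' : Type u} [Ring A'] [Algebra F A'] {a b : F}
    {i j : A} {i' j' : A'}
    (hi : i * i + i = algebraMap F A a) (hj : j * j = algebraMap F A b)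
    (hc : j * i = (1 + i) * j)
    (hspan : Submodule.span F (Set.range ![(1:A), i, j, i * j]) = ⊤)
    (hrank : Module.finrank F A = 4)
    (hi' : i' * i' + i' = algebraMap F A' a) (hj' : j' * j' = algebraMap F A' b)
    (hc' : j' * i' = (1 + i') * j')
    (hspan' : Submodule.span F (Set.range ![(1:A'), i', j', i' * j']) = ⊤)
    (hrank' : Module.finrank F A' = 4) :
    Nonempty (A ≃ₐ[F] A') := by
  have hcard : Fintype.card (Fin 4) = Module.finrank F A := by simp [hrank]
  have hcard' : Fintype.card (Fin 4) = Module.finrank F A' := by simp [hrank']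
  let bA : Module.Basis (Fin 4) F A :=
    basisOfTopLeSpanOfCardEqFinrank ![(1:A), i, j, i * j] hspan.ge hcard
  let bA' : Module.Basis (Fin 4) F A' :=
    basisOfTopLeSpanOfCardEqFinrank ![(1:A'), i', j', i' * j'] hspan'.ge hcard'
  have hbA : ⇑bA = ![(1:A), i, j, i * j] := coe_basisOfTopLeSpanOfCardEqFinrank _ _ _
  have hbA' : ⇑bA' = ![(1:A'), i', j', i' * j'] := coe_basisOfTopLeSpanOfCardEqFinrank _ _ _
  let f : A ≃ₗ[F] A' := bA.equiv bA' (Equiv.refl _)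
  have hfk : ∀ k : Fin 4, f (![(1:A), i, j, i * j] k) = ![(1:A'), i', j', i' * j'] k := by
    intro k
    have h := bA.equiv_apply (i := k) (b' := bA') (e := Equiv.refl _)
    rw [hbA, hbA', Equiv.refl_apply] at h
    exact h
  have hf0 : f 1 = 1 := hfk 0
  have hf1 : f i = i' := hfk 1
  have hf2 : f j = j' := hfk 2
  have hf3 : f (i * j) = i' * j' := hfk 3
  have key : ∀ p q : Fin 4,
      f (![(1:A), i, j, i * j] p * ![(1:A), i, j, i * j] q) =
        f (![(1:A), i, j, i * j] p) * f (![(1:A), i, j, i * j] q) := by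
    intro p q
    fin_cases p <;> fin_cases q <;>
      simp [one_mul, mul_one, qt1 hi, qt2 hj, qt3 hc, qt4 hi, qt5 hj hc, qt6 hi hc, qt7 hj,
        qt8 hi hj hc, map_add, map_sub, map_smul, hf0, hf1, hf2, hf3,
        qt1 hi', qt2 hj', qt3 hc', qt4 hi', qt5 hj' hc', qt6 hi' hc', qt7 hj',
        qt8 hi' hj' hc']
  have hmul : ∀ z w : A, f (z * w) = f z * f w := by
    have hB : (LinearMap.mul F A).compr₂ (f : A →ₗ[F] A') =
        (LinearMap.mul F A').compl₁₂ (f : A →ₗ[F] A') (f : A →ₗ[F] A') := by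
      refine bA.ext fun p => bA.ext fun q => ?_
      simp only [LinearMap.compr₂_apply, LinearMap.mul_apply', LinearMap.compl₁₂_apply,
        LinearEquiv.coe_coe, hbA]
      exact key p q
    intro z w
    have := DFunLike.congr_fun (DFunLike.congr_fun hB z) w
    simpa only [LinearMap.compr₂_apply, LinearMap.mul_apply', LinearMap.compl₁₂_apply,
      LinearEquiv.coe_coe] using this
  exact ⟨AlgEquiv.ofLinearEquiv f hf0 hmul⟩

end quatAux

/-- For an inseparable quadratic extension `K/F` (char 2, `K² ⊆ F`) with
Frobenius `σ : K → F`, `z ↦ z²`, the Frobenius transfer of `[x,y)_K` (the base change of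
`[x,y)_K` along `σ`) is Brauer equivalent to `[x², y²)_F`. -/
theorem stmt_2 (F K Q Q' : Type u) [Field F] [Field K] [Algebra F K] [CharP F 2]
    (hins : ∀ z : K, z ^ 2 ∈ (algebraMap F K).range) (hdeg : Module.finrank F K = 2)
    (σ : K →+* F) (hσ : ∀ z : K, algebraMap F K (σ z) = z ^ 2)
    [Ring Q] [Algebra K Q] (x y : K) (hy : y ≠ 0) (hQ : IsQuatAlg K Q x y)
    [Ring Q'] [Algebra F Q'] (hQ' : IsQuatAlg F Q' (σ x) (σ y)) :
    letI : Algebra K F := σ.toAlgebra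
    BrEq F (F ⊗[K] Q) Q' := by
  letI : Algebra K F := σ.toAlgebra
  show BrEq F (F ⊗[K] Q) Q'
  obtain ⟨hrQ, i, j, hi, hj, hc, hadj⟩ := hQ
  obtain ⟨hrQ', i', j', hi', hj', hc', hadj'⟩ := hQ'
  have hspanQ := quat_span hi hj hc hadj
  have hcardQ : Fintype.card (Fin 4) = Module.finrank K Q := by simp [hrQ]
  let bQ : Module.Basis (Fin 4) K Q :=
    basisOfTopLeSpanOfCardEqFinrank ![(1:Q), i, j, i * j] hspanQ.ge hcardQ
  have hbQ : ⇑bQ = ![(1:Q), i, j, i * j] := coe_basisOfTopLeSpanOfCardEqFinrank _ _ _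
  set bT : Module.Basis (Fin 4) F (F ⊗[K] Q) := bQ.baseChange F with hbTdef
  have hrT : Module.finrank F (F ⊗[K] Q) = 4 := by
    rw [Module.finrank_eq_card_basis bT]; simp
  set I : F ⊗[K] Q := (1:F) ⊗ₜ[K] i with hIdef
  set J : F ⊗[K] Q := (1:F) ⊗ₜ[K] j with hJdef
  have hIJ : I * J = (1:F) ⊗ₜ[K] (i * j) := by
    rw [hIdef, hJdef, Algebra.TensorProduct.tmul_mul_tmul, one_mul]
  have htm : ∀ z : K, (1:F) ⊗ₜ[K] (algebraMap K Q z) = algebraMap F (F ⊗[K] Q) (σ z) := by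
    intro z
    rw [Algebra.algebraMap_eq_smul_one, TensorProduct.tmul_smul, TensorProduct.smul_tmul',
      Algebra.smul_def, RingHom.algebraMap_toAlgebra, mul_one,
      Algebra.TensorProduct.algebraMap_apply, Algebra.algebraMap_self_apply]
  have hI2 : I * I + I = algebraMap F (F ⊗[K] Q) (σ x) := by
    rw [hIdef, Algebra.TensorProduct.tmul_mul_tmul, one_mul, ← TensorProduct.tmul_add, hi, htm]
  have hJ2 : J * J = algebraMap F (F ⊗[K] Q) (σ y) := by
    rw [hJdef, Algebra.TensorProduct.tmul_mul_tmul, one_mul, hj, htm]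
  have hC : J * I = (1 + I) * J := by
    rw [hJdef, hIdef, Algebra.TensorProduct.tmul_mul_tmul, one_mul, hc,
      Algebra.TensorProduct.one_def, ← TensorProduct.tmul_add,
      Algebra.TensorProduct.tmul_mul_tmul, one_mul]
  have hspanT : Submodule.span F (Set.range ![(1 : F ⊗[K] Q), I, J, I * J]) = ⊤ := by
    have hvec : ![(1 : F ⊗[K] Q), I, J, I * J] = ⇑bT := by
      funext k
      fin_cases k <;>
        simp [hbTdef, Module.Basis.baseChange_apply, hbQ, hIJ, hIdef, hJdef,
          Algebra.TensorProduct.one_def]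
    rw [hvec]
    exact bT.span_eq
  obtain ⟨e⟩ := quat_iso hI2 hJ2 hC hspanT hrT hi' hj' hc'
    (quat_span hi' hj' hc' hadj') hrQ'
  exact ⟨1, 1, one_pos, one_pos, ⟨e.mapMatrix⟩⟩
end

section
/- Let F be a field of characteristic 2, K = F(√b) an inseparable quadratic extension with b ∈ F^× \ F^×², and s : K → F the F-linear functional with s(1) = 0 and s(√b) = 1. For z = x + y√b ∈ K^× with x, y ∈ F and y ≠ 0, the transfer s_*(⟨z⟩_b) of the 1-dimensional bilinear form ⟨z⟩_b is isometric to the binary symmetric bilinear form ⟨y, y(x² + by²)⟩_b over F. -/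
open scoped TensorProduct

universe u

/-- For `K = F(√b)` with `s(1) = 0`, `s(√b) = 1`, and `z = x + y√b` with
`y ≠ 0`, the transfer `s_*(⟨z⟩_b)` is isometric to the diagonal bilinear form
`⟨y, y(x² + by²)⟩_b` over `F`. -/
theorem stmt_5 (F K : Type u) [Field F] [Field K] [Algebra F K] [CharP F 2]
    (b : F) (hbns : ∀ u : F, u ^ 2 ≠ b) (β : K) (hβ : β ^ 2 = algebraMap F K b)
    (hspan : ∀ w : K, ∃ u v : F, w = algebraMap F K u + algebraMap F K v * β)
    (s : K →ₗ[F] F) (hs1 : s 1 = 0) (hsβ : s β = 1)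
    (x y : F) (hy : y ≠ 0) :
    ∃ e : K ≃ₗ[F] F × F, ∀ u v : K,
      s ((algebraMap F K x + algebraMap F K y * β) * u * v)
        = y * (e u).1 * (e v).1 + y * (x ^ 2 + b * y ^ 2) * (e u).2 * (e v).2 := by
  haveI : CharP K 2 := charP_of_injective_algebraMap (algebraMap F K).injective 2
  have h2 : (2 : K) = 0 := by exact_mod_cast CharP.cast_eq_zero K 2
  set c : F := x ^ 2 + b * y ^ 2 with hc
  set w : K := algebraMap F K x + algebraMap F K y * β with hw
  have hsmul : ∀ (t : F) (k : K), s (algebraMap F K t * k) = t * s k := fun t k => by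
    rw [← Algebra.smul_def, map_smul, smul_eq_mul]
  have hsc : ∀ t : F, s (algebraMap F K t) = 0 := fun t => by
    rw [Algebra.algebraMap_eq_smul_one, map_smul, hs1, smul_zero]
  have hsw : s w = y := by
    rw [hw, map_add, hsc, hsmul, hsβ, mul_one, zero_add]
  have hw2 : w * w = algebraMap F K c := by
    have h1 : w * w = algebraMap F K x * algebraMap F K x
        + algebraMap F K y * algebraMap F K y * β ^ 2
        + 2 * (algebraMap F K x * (algebraMap F K y * β)) := by rw [hw]; ring
    rw [h1, h2, zero_mul, add_zero, hβ, ← map_mul, ← map_mul, ← map_mul, ← map_add]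
    congr 1; rw [hc]; ring
  -- the linear map (a₁, a₂) ↦ a₁ + a₂ w
  let f : (F × F) →ₗ[F] K :=
    { toFun := fun a => algebraMap F K a.1 + algebraMap F K a.2 * w
      map_add' := by intro a a'; simp only [Prod.fst_add, Prod.snd_add, map_add]; ring
      map_smul' := by
        intro t a
        show algebraMap F K (t • a).1 + algebraMap F K (t • a).2 * w
            = (RingHom.id F) t • (algebraMap F K a.1 + algebraMap F K a.2 * w)
        rw [Prod.smul_fst, Prod.smul_snd, smul_eq_mul, smul_eq_mul, RingHom.id_apply,
          Algebra.smul_def, map_mul, map_mul]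
        ring }
  have hfapp : ∀ a : F × F, f a = algebraMap F K a.1 + algebraMap F K a.2 * w := fun a => rfl
  have hind : ∀ u v : F, algebraMap F K u + algebraMap F K v * β = 0 → u = 0 ∧ v = 0 := by
    intro u v h
    by_cases hv : v = 0
    · rw [hv, map_zero, zero_mul, add_zero] at h
      exact ⟨(algebraMap F K).injective (by simpa using h), hv⟩
    · exfalso
      have hmul : algebraMap F K v * β = algebraMap F K u := by
        have : algebraMap F K v * β = -(algebraMap F K u) := by linear_combination h
        exact this.trans (CharTwo.neg_eq _)
      have hsq : algebraMap F K (v ^ 2 * b) = algebraMap F K (u ^ 2) := by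
        rw [map_mul, ← hβ, map_pow, map_pow]
        linear_combination (algebraMap F K v * β + algebraMap F K u) * hmul
      have hFsq : v ^ 2 * b = u ^ 2 := (algebraMap F K).injective hsq
      exact hbns (u / v) (by field_simp; linear_combination -hFsq)
  have hf : Function.Bijective f := by
    constructor
    · rw [injective_iff_map_eq_zero]
      intro a ha
      rw [hfapp, hw] at ha
      have ha' : algebraMap F K (a.1 + a.2 * x) + algebraMap F K (a.2 * y) * β = 0 := by
        rw [map_add, map_mul, map_mul]; linear_combination ha
      obtain ⟨h1', h2'⟩ := hind _ _ ha'
      have ha2 : a.2 = 0 := by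
        rcases mul_eq_zero.mp h2' with h | h
        · exact h
        · exact absurd h hy
      have ha1 : a.1 = 0 := by rw [ha2, zero_mul, add_zero] at h1'; exact h1'
      exact Prod.ext ha1 ha2
    · intro k
      obtain ⟨u, v, huv⟩ := hspan k
      refine ⟨(u - v / y * x, v / y), ?_⟩
      rw [hfapp, hw, huv]
      have hyK : algebraMap F K y ≠ 0 := fun h =>
        hy ((algebraMap F K).injective (by simpa using h))
      simp only [map_sub, map_mul, map_div₀]
      field_simp
      ring
  refine ⟨(LinearEquiv.ofBijective f hf).symm, ?_⟩
  set e := (LinearEquiv.ofBijective f hf).symm with he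
  have key : ∀ a a' : F × F, s (w * f a * f a') = y * a.1 * a'.1 + y * c * a.2 * a'.2 := by
    intro a a'
    have expand : w * f a * f a' =
        algebraMap F K (a.1 * a'.1) * w + algebraMap F K (a.1 * a'.2 + a.2 * a'.1) * (w * w)
          + algebraMap F K (a.2 * a'.2) * (w * w * w) := by
      rw [hfapp, hfapp]; simp only [map_add, map_mul]; ring
    rw [expand, hw2, map_add, map_add, hsmul, hsmul, hsmul, hsw, hsc,
      show algebraMap F K c * w = algebraMap F K c * w from rfl, hsmul, hsw]
    ring
  intro u v
  have hu : u = f (e u) := ((LinearEquiv.ofBijective f hf).apply_symm_apply u).symm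
  have hv' : v = f (e v) := ((LinearEquiv.ofBijective f hf).apply_symm_apply v).symm
  calc s ((algebraMap F K x + algebraMap F K y * β) * u * v)
      = s (w * f (e u) * f (e v)) := by rw [← hw, ← hu, ← hv']
    _ = y * (e u).1 * (e v).1 + y * c * (e u).2 * (e v).2 := key _ _
    _ = y * (e u).1 * (e v).1 + y * (x ^ 2 + b * y ^ 2) * (e u).2 * (e v).2 := by rw [hc]
end

section
/- Let F be a field of characteristic 2, D a central division F-algebra of exponent 2 containing an inseparable quadratic extension K/F, and suppose the centralizer C_D(K) contains a separable quadratic extension L/K. Writing L = K(α) with α² − α ∈ K, the field L' = F(α²) is a separable quadratic extension of F and L = K·L'; in particular L/F is a mixed biquadratic inseparable field extension contained in D. -/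
open scoped TensorProduct

universe u

open Polynomial in
theorem aux_minpoly_quad {F D : Type*} [Field F] [Ring D] [Nontrivial D] [Algebra F D]
    {x : D} {p : F[X]} (hm : p.Monic) (hd : p.natDegree = 2)
    (hroot : Polynomial.aeval x p = 0) (hx : x ∉ Set.range (algebraMap F D)) :
    minpoly F x = p := by
  have hint : IsIntegral F x := ⟨p, hm, hroot⟩
  obtain ⟨q, hq⟩ := minpoly.dvd F x hroot
  have hmm := minpoly.monic hint
  have hqm : q.Monic := hmm.of_mul_monic_left (hq ▸ hm)
  have hdeg : (minpoly F x).natDegree + q.natDegree = 2 := by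
    rw [← Polynomial.natDegree_mul hmm.ne_zero hqm.ne_zero, ← hq, hd]
  have h1 : (minpoly F x).natDegree ≠ 1 := by
    intro h1
    apply hx
    have h2 := hmm.eq_X_add_C h1
    have h3 := minpoly.aeval F x
    rw [h2, map_add, aeval_X, aeval_C] at h3
    refine ⟨-(minpoly F x).coeff 0, ?_⟩
    rw [map_neg, neg_eq_iff_add_eq_zero, add_comm]
    exact h3
  have hpos := minpoly.natDegree_pos hint
  have hq0 : q.natDegree = 0 := by omega
  rw [hq, hqm.natDegree_eq_zero.mp hq0, mul_one]


set_option maxHeartbeats 2000000 in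
set_option synthInstance.maxHeartbeats 400000 in
/-- Let `D` be a central division `F`-algebra of exponent 2 in
characteristic 2 containing `K = F(√b)`, and let `α ∈ C_D(K)` with `α² − α ∈ K`,
`α ∉ K`. Then `L' = F(α²)` is a separable quadratic extension of `F` and
`L = K(α) = K·L'`; in particular `L/F` is a mixed biquadratic (degree 4, inseparable)
extension contained in `D`. -/
theorem stmt_15 (F D : Type u) [Field F] [CharP F 2] [DivisionRing D] [Algebra F D]
    [Algebra.IsCentral F D] [FiniteDimensional F D]
    (hexp : IsSplitAlg F (D ⊗[F] D))
    (b : F) (hbns : ∀ u : F, u ^ 2 ≠ b) (β : D) (hβ : β * β = algebraMap F D b)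
    (α : D) (hcomm : α * β = β * α) (hαK : α ∉ Algebra.adjoin F {β})
    (hAS : α * α - α ∈ Algebra.adjoin F {β}) :
    IsSeparable F (α * α) ∧ Module.finrank F ↥(Algebra.adjoin F {α * α}) = 2 ∧
    Algebra.adjoin F {β, α} = Algebra.adjoin F {β, α * α} ∧
    Module.finrank F ↥(Algebra.adjoin F {β, α}) = 4 ∧
    ¬ IsSeparable F β := by
  classical
  have hκinj : Function.Injective (algebraMap F D) := RingHom.injective _
  have h2F : (2 : F) = 0 := by exact_mod_cast CharP.cast_eq_zero F 2
  have h2D : (2 : D) = 0 := by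
    rw [← map_ofNat (algebraMap F D) 2, h2F, map_zero]
  have hβF : β ∉ Set.range (algebraMap F D) := by
    rintro ⟨u, hu⟩
    refine hbns u (hκinj ?_)
    rw [map_pow, hu, sq, hβ]
  have hβ1 : β * β = b • (1 : D) := by rw [hβ, Algebra.algebraMap_eq_smul_one]
  -- representation of elements of K = F(β)
  have hKrep : ∀ z ∈ Algebra.adjoin F {β}, ∃ u v : F, z = u • (1:D) + v • β := by
    intro z hz
    induction hz using Algebra.adjoin_induction with
    | mem x hx =>
      rw [Set.mem_singleton_iff] at hx; subst hx
      exact ⟨0, 1, by simp⟩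
    | algebraMap r => exact ⟨r, 0, by simp [Algebra.algebraMap_eq_smul_one]⟩
    | add x y hx hy ihx ihy =>
      obtain ⟨u1, v1, rfl⟩ := ihx; obtain ⟨u2, v2, rfl⟩ := ihy
      exact ⟨u1 + u2, v1 + v2, by module⟩
    | mul x y hx hy ihx ihy =>
      obtain ⟨u1, v1, rfl⟩ := ihx; obtain ⟨u2, v2, rfl⟩ := ihy
      refine ⟨u1*u2 + v1*v2*b, u1*v2 + v1*u2, ?_⟩
      simp only [add_mul, mul_add, smul_mul_assoc, mul_smul_comm, one_mul, mul_one, hβ1,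
        smul_smul]
      module
  obtain ⟨cx, cy, hc⟩ := hKrep _ hAS
  set e : F := cx*cx + cy*cy*b with he
  have hcc : (α*α - α) * (α*α - α) = algebraMap F D e := by
    rw [hc]
    have hxy : cx * cy + cy * cx = 0 := by linear_combination cx * cy * h2F
    have expand : (cx • (1:D) + cy • β) * (cx • (1:D) + cy • β)
        = (cx*cx + cy*cy*b) • (1:D) + (cx*cy + cy*cx) • β := by
      simp only [add_mul, mul_add, smul_mul_assoc, mul_smul_comm, one_mul, mul_one, hβ1,
        smul_smul]
      module
    rw [expand, hxy, zero_smul, add_zero, Algebra.algebraMap_eq_smul_one]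
  have hγAS : (α*α) * (α*α) - (α*α) = algebraMap F D e := by
    have key : (α*α - α) * (α*α - α) - ((α*α)*(α*α) - (α*α)) = 2 * (α*α - α*(α*α)) := by
      noncomm_ring
    rw [hcc, h2D, zero_mul, sub_eq_zero] at key
    exact key.symm
  have hγF : (α*α) ∉ Set.range (algebraMap F D) := by
    rintro ⟨g, hg⟩
    apply hαK
    have hmem : α*α - (α*α - α) ∈ Algebra.adjoin F {β} := by
      refine Subalgebra.sub_mem _ ?_ hAS
      rw [← hg]
      exact Subalgebra.algebraMap_mem _ g
    rwa [sub_sub_cancel] at hmem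
  -- the minimal polynomial of α*α
  set p : Polynomial F := Polynomial.X^2 - Polynomial.X - Polynomial.C e with hp
  have hpd : p.natDegree = 2 := by rw [hp]; compute_degree!
  have hpm : p.Monic := by rw [hp]; monicity!
  have hproot : Polynomial.aeval (α*α) p = 0 := by
    rw [hp]
    simp only [map_sub, map_pow, Polynomial.aeval_X, Polynomial.aeval_C]
    rw [pow_two, hγAS, sub_self]
  have hminγ : minpoly F (α*α) = p := aux_minpoly_quad hpm hpd hproot hγF
  have hpsep : p.Separable := by
    have hpder : Polynomial.derivative p = -1 := by
      rw [hp]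
      simp [Polynomial.derivative_sub, one_add_one_eq_two, h2F]
    rw [Polynomial.Separable, hpder]
    exact (isCoprime_one_right).neg_right
  have hγsep : IsSeparable F (α*α) := by
    rw [IsSeparable, hminγ]; exact hpsep
  -- the minimal polynomial of β
  set qb : Polynomial F := Polynomial.X^2 - Polynomial.C b with hqb
  have hqbd : qb.natDegree = 2 := by rw [hqb]; compute_degree!
  have hqbm : qb.Monic := by rw [hqb]; monicity!
  have hqbroot : Polynomial.aeval β qb = 0 := by
    rw [hqb]
    simp only [map_sub, map_pow, Polynomial.aeval_X, Polynomial.aeval_C]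
    rw [pow_two, hβ, sub_self]
  have hminβ : minpoly F β = qb := aux_minpoly_quad hqbm hqbd hqbroot hβF
  have hβsep : ¬ IsSeparable F β := by
    intro hs
    have hder : Polynomial.derivative qb = 0 := by
      rw [hqb]
      simp [one_add_one_eq_two, h2F]
    have hs' : qb.Separable := by rwa [IsSeparable, hminβ] at hs
    rw [Polynomial.Separable, hder] at hs'
    have hu := isCoprime_zero_right.mp hs'
    have := Polynomial.natDegree_eq_zero_of_isUnit hu
    omega
  -- goal 3
  have hgoal3 : Algebra.adjoin F {β, α} = Algebra.adjoin F {β, α * α} := by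
    have hmem1 : α ∈ Algebra.adjoin F {β, α*α} := by
      have h1 : α*α - α ∈ Algebra.adjoin F {β, α*α} :=
        Algebra.adjoin_mono (Set.singleton_subset_iff.mpr (Set.mem_insert _ _)) hAS
      have h2 : α*α ∈ Algebra.adjoin F {β, α*α} :=
        Algebra.subset_adjoin (by simp)
      have h3 := sub_mem h2 h1
      rwa [sub_sub_cancel] at h3
    have hmem2 : α*α ∈ Algebra.adjoin F {β, α} :=
      mul_mem (Algebra.subset_adjoin (by simp)) (Algebra.subset_adjoin (by simp))
    apply le_antisymm
    · apply Algebra.adjoin_le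
      intro x hx
      simp only [Set.mem_insert_iff, Set.mem_singleton_iff] at hx
      rcases hx with rfl | rfl
      · exact Algebra.subset_adjoin (Set.mem_insert _ _)
      · exact hmem1
    · apply Algebra.adjoin_le
      intro x hx
      simp only [Set.mem_insert_iff, Set.mem_singleton_iff] at hx
      rcases hx with rfl | rfl
      · exact Algebra.subset_adjoin (Set.mem_insert _ _)
      · exact hmem2
  -- the commutative subalgebra A = F[β, α]
  have hβα : ∀ x ∈ ({β, α} : Set D), ∀ y ∈ ({β, α} : Set D), x * y = y * x := by
    intro x hx y hy
    simp only [Set.mem_insert_iff, Set.mem_singleton_iff] at hx hy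
    rcases hx with rfl | rfl <;> rcases hy with rfl | rfl
    · rfl
    · exact hcomm.symm
    · exact hcomm
    · rfl
  set A := Algebra.adjoin F {β, α} with hA
  letI commA : CommRing ↥A := Algebra.adjoinCommRingOfComm F hβα
  haveI hAfd : FiniteDimensional F ↥A :=
    inferInstanceAs (FiniteDimensional F (Subalgebra.toSubmodule A))
  haveI : Algebra.IsIntegral F ↥A := Algebra.IsIntegral.of_finite F ↥A
  have hAfield : IsField ↥A :=
    (Algebra.IsIntegral.isField_iff_isField
      (RingHom.injective (algebraMap F ↥A))).mp (Field.toIsField F)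
  letI fieldA : Field ↥A := hAfield.toField
  have hβA : β ∈ A := Algebra.subset_adjoin (Set.mem_insert _ _)
  have hαA : α ∈ A := Algebra.subset_adjoin (by simp)
  set β' : ↥A := ⟨β, hβA⟩ with hβ'
  set α' : ↥A := ⟨α, hαA⟩ with hα'
  have hvalinj : Function.Injective (A.val : ↥A →ₐ[F] D) := Subtype.val_injective
  have hmβ' : minpoly F β' = qb := by
    rw [← hminβ, ← minpoly.algHom_eq A.val hvalinj β']
    rfl
  have hmγ' : minpoly F (α' * α') = p := by
    rw [← hminγ, ← minpoly.algHom_eq A.val hvalinj (α' * α')]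
    rfl
  -- goal 2
  have hmapγ : (Algebra.adjoin F {α' * α'}).map A.val = Algebra.adjoin F {α * α} := by
    rw [AlgHom.map_adjoin_singleton]
    rfl
  have hgoal2 : Module.finrank F ↥(Algebra.adjoin F {α * α}) = 2 := by
    rw [← hmapγ,
      ← (Subalgebra.equivMapOfInjective (Algebra.adjoin F {α' * α'}) A.val
        hvalinj).toLinearEquiv.finrank_eq,
      ← IntermediateField.adjoin_simple_toSubalgebra_of_isAlgebraic (IsIntegral.of_finite F (α'*α')).isAlgebraic,
      IntermediateField.finrank_eq_finrank_subalgebra,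
      IntermediateField.adjoin.finrank (IsIntegral.of_finite F (α'*α')), hmγ', hpd]
  -- goal 4
  set K₀ : IntermediateField F ↥A := IntermediateField.adjoin F {β'} with hK₀
  have hK₀sub : K₀.toSubalgebra = Algebra.adjoin F {β'} :=
    IntermediateField.adjoin_simple_toSubalgebra_of_isAlgebraic (IsIntegral.of_finite F β').isAlgebraic
  have hK₀fin : Module.finrank F ↥K₀ = 2 := by
    rw [hK₀, IntermediateField.adjoin.finrank (IsIntegral.of_finite F β'), hmβ', hqbd]
  have hmapβ : (Algebra.adjoin F {β'}).map A.val = Algebra.adjoin F {β} := by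
    rw [AlgHom.map_adjoin_singleton]
    rfl
  have hα'K₀ : α' ∉ K₀ := by
    intro h
    apply hαK
    have h1 : α' ∈ Algebra.adjoin F {β'} := by
      rw [← hK₀sub]; exact h
    have h2 : A.val α' ∈ (Algebra.adjoin F {β'}).map A.val := Subalgebra.mem_map.mpr ⟨α', h1, rfl⟩
    rwa [hmapβ] at h2
  have hc'K₀ : α' * α' - α' ∈ K₀ := by
    have hcmem : A.val (α' * α' - α') ∈ (Algebra.adjoin F {β'}).map A.val := by
      rw [hmapβ]
      exact hAS
    obtain ⟨z, hz, hzeq⟩ := Subalgebra.mem_map.mp hcmem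
    have hzz : z = α' * α' - α' := hvalinj hzeq
    rw [← hzz]
    rw [← IntermediateField.mem_toSubalgebra, hK₀sub]
    exact hz
  haveI : FiniteDimensional ↥K₀ ↥A := Module.Finite.right F ↥K₀ ↥A
  set c₀ : ↥K₀ := ⟨α' * α' - α', hc'K₀⟩ with hc₀
  set p' : Polynomial ↥K₀ := Polynomial.X^2 - Polynomial.X - Polynomial.C c₀ with hp'
  have hp'd : p'.natDegree = 2 := by rw [hp']; compute_degree!
  have hp'm : p'.Monic := by rw [hp']; monicity!
  have hp'root : Polynomial.aeval α' p' = 0 := by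
    rw [hp']
    simp only [map_sub, map_pow, Polynomial.aeval_X, Polynomial.aeval_C]
    have hcm : (algebraMap ↥K₀ ↥A) c₀ = α' * α' - α' := rfl
    rw [hcm, pow_two]
    exact sub_self _
  have hα'range : α' ∉ Set.range (algebraMap ↥K₀ ↥A) := by
    rintro ⟨k, hk⟩
    apply hα'K₀
    have hk' : (k : ↥A) = α' := hk
    rw [← hk']
    exact k.2
  have hmα' : minpoly ↥K₀ α' = p' := aux_minpoly_quad hp'm hp'd hp'root hα'range
  have htopalg : Algebra.adjoin F {β', α'} = (⊤ : Subalgebra F ↥A) := by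
    apply Subalgebra.map_injective hvalinj
    rw [Algebra.map_top, Subalgebra.range_val, AlgHom.map_adjoin]
    have himg : (A.val : ↥A →ₐ[F] D) '' {β', α'} = {β, α} := by
      simp [Set.image_insert_eq]
      rfl
    rw [himg, ← hA]
  have htopIF : IntermediateField.adjoin F {β', α'} = ⊤ := by
    apply IntermediateField.toSubalgebra_injective
    rw [IntermediateField.top_toSubalgebra]
    exact le_antisymm le_top (htopalg ▸ IntermediateField.algebra_adjoin_le_adjoin F _)
  have hK₀α : IntermediateField.adjoin ↥K₀ {α'} = ⊤ := by
    apply IntermediateField.restrictScalars_injective F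
    rw [IntermediateField.restrictScalars_top, hK₀, IntermediateField.adjoin_adjoin_left,
      Set.singleton_union]
    exact htopIF
  have hfinK₀A : Module.finrank ↥K₀ ↥A = 2 := by
    have h1 : Module.finrank ↥K₀ ↥(IntermediateField.adjoin ↥K₀ {α'}) = 2 := by
      rw [IntermediateField.adjoin.finrank (IsIntegral.of_finite ↥K₀ α'), hmα', hp'd]
    rw [hK₀α] at h1
    rwa [(IntermediateField.topEquiv (F := ↥K₀) (E := ↥A)).toLinearEquiv.finrank_eq] at h1
  have hgoal4 : Module.finrank F ↥A = 4 := by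
    have hmul := Module.finrank_mul_finrank F ↥K₀ ↥A
    rw [hK₀fin, hfinK₀A] at hmul
    omega
  exact ⟨hγsep, hgoal2, hgoal3, hgoal4, hβsep⟩
end

section
/- Let F be a field of characteristic 2 and K/F a purely inseparable quadratic extension (K² ⊆ F). Then I²_q K = IK ⊗ I_q F; that is, every class in I²_q K is a sum of classes of forms ⟨1, u⟩_b ⊗ φ with u ∈ K^× and φ a nonsingular quadratic form defined over F. -/
open scoped TensorProduct

universe u

noncomputable section Stmt17Aux

open QuadraticMap

variable {R : Type u} [CommRing R] {M M' M₁ M₂ M₃ M₄ M₅ N₁ N₂ : Type u}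
  [AddCommGroup M] [Module R M] [AddCommGroup M'] [Module R M']
  [AddCommGroup M₁] [Module R M₁] [AddCommGroup M₂] [Module R M₂]
  [AddCommGroup M₃] [Module R M₃] [AddCommGroup M₄] [Module R M₄]
  [AddCommGroup M₅] [Module R M₅] [AddCommGroup N₁] [Module R N₁]
  [AddCommGroup N₂] [Module R N₂]

@[simp] theorem binQF_apply (a b : R) (z : R × R) :
    binQF R a b z = a * z.1 * z.1 + z.1 * z.2 + b * z.2 * z.2 := rfl

theorem equivalent_of_eq {Q₁ Q₂ : QuadraticForm R M} (h : Q₁ = Q₂) : Q₁.Equivalent Q₂ :=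
  h ▸ QuadraticMap.Equivalent.refl Q₁

/-- scaling an isometry equivalence -/
def smulIso {Q₁ : QuadraticForm R M} {Q₂ : QuadraticForm R M'} (a : R)
    (e : Q₁.IsometryEquiv Q₂) : (a • Q₁).IsometryEquiv (a • Q₂) where
  toLinearEquiv := e.toLinearEquiv
  map_app' m := by
    simp only [QuadraticMap.smul_apply]
    exact congrArg (fun t => a • t) (e.map_app' m)

theorem smul_prod (a : R) (Q₁ : QuadraticForm R M₁) (Q₂ : QuadraticForm R M₂) :
    a • (Q₁.prod Q₂) = (a • Q₁).prod (a • Q₂) := by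
  ext x
  simp [QuadraticMap.prod_apply, QuadraticMap.smul_apply, mul_add]

/-- splitting off the head of a `pi` quadratic form over `Fin (n+1)` (constant module). -/
def consIso {n : ℕ} (Q : Fin (n + 1) → QuadraticForm R M) :
    (QuadraticMap.pi Q).IsometryEquiv
      ((Q 0).prod (QuadraticMap.pi fun i : Fin n => Q i.succ)) where
  toLinearEquiv :=
    { toFun := fun v => (v 0, fun i => v i.succ)
      invFun := fun p => Fin.cons p.1 p.2
      map_add' := fun _ _ => rfl
      map_smul' := fun _ _ => rfl
      left_inv := fun v => Fin.cons_self_tail v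
      right_inv := fun p => by
        refine Prod.ext ?_ (funext fun i => ?_) <;> simp }
  map_app' v := by
    simp [QuadraticMap.pi_apply, QuadraticMap.prod_apply, Fin.sum_univ_succ]

/-- a quadratic form is isometric to the `pi` of one copy of itself -/
def oneIso (Q : QuadraticForm R M) :
    Q.IsometryEquiv (QuadraticMap.pi fun _ : Fin 1 => Q) where
  toLinearEquiv := (LinearEquiv.funUnique (Fin 1) R M).symm
  map_app' m := by
    simp [QuadraticMap.pi_apply, LinearEquiv.funUnique]

/-- isometry between quadratic forms on subsingleton modules -/
def subsingletonIso [Subsingleton M] [Subsingleton M'] (Q : QuadraticForm R M)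
    (Q' : QuadraticForm R M') : Q.IsometryEquiv Q' where
  toLinearEquiv :=
    { toFun := fun _ => 0
      invFun := fun _ => 0
      map_add' := fun _ _ => (zero_add _).symm
      map_smul' := fun c x => by simp
      left_inv := fun x => Subsingleton.elim _ _
      right_inv := fun x => Subsingleton.elim _ _ }
  map_app' m := by
    rw [Subsingleton.elim m 0]
    simp

/-- adding a trivial factor -/
def prodEmptyIso (Q : QuadraticForm R M) (P : Fin 0 → QuadraticForm R M') :
    Q.IsometryEquiv (Q.prod (QuadraticMap.pi P)) where
  toLinearEquiv :=
    { toFun := fun x => (x, 0)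
      invFun := fun p => p.1
      map_add' := fun a b => Prod.ext rfl (Subsingleton.elim _ _)
      map_smul' := fun c x => Prod.ext rfl (Subsingleton.elim _ _)
      left_inv := fun x => rfl
      right_inv := fun p => Prod.ext rfl (Subsingleton.elim _ _) }
  map_app' m := by simp [QuadraticMap.prod_apply]

/-- `(Q₁ ⊥ Q₂) ⊥ Q₃ ≅ Q₁ ⊥ (Q₂ ⊥ Q₃)` -/
def assocIso (Q₁ : QuadraticForm R M₁) (Q₂ : QuadraticForm R M₂) (Q₃ : QuadraticForm R M₃) :
    ((Q₁.prod Q₂).prod Q₃).IsometryEquiv (Q₁.prod (Q₂.prod Q₃)) where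
  toLinearEquiv :=
    { toFun := fun x => (x.1.1, (x.1.2, x.2))
      invFun := fun y => ((y.1, y.2.1), y.2.2)
      map_add' := fun _ _ => rfl
      map_smul' := fun _ _ => rfl
      left_inv := fun _ => rfl
      right_inv := fun _ => rfl }
  map_app' x := by simp [QuadraticMap.prod_apply]; ring

/-- `(Q₁ ⊥ Q₂) ⊥ (Q₃ ⊥ (Q₄ ⊥ Q₅)) ≅ (Q₁ ⊥ (Q₃ ⊥ Q₄)) ⊥ (Q₂ ⊥ Q₅)` -/
def shuffleIsoA (Q₁ : QuadraticForm R M₁) (Q₂ : QuadraticForm R M₂) (Q₃ : QuadraticForm R M₃)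
    (Q₄ : QuadraticForm R M₄) (Q₅ : QuadraticForm R M₅) :
    ((Q₁.prod Q₂).prod (Q₃.prod (Q₄.prod Q₅))).IsometryEquiv
      ((Q₁.prod (Q₃.prod Q₄)).prod (Q₂.prod Q₅)) where
  toLinearEquiv :=
    { toFun := fun x => ((x.1.1, (x.2.1, x.2.2.1)), (x.1.2, x.2.2.2))
      invFun := fun y => ((y.1.1, y.2.1), (y.1.2.1, (y.1.2.2, y.2.2)))
      map_add' := fun _ _ => rfl
      map_smul' := fun _ _ => rfl
      left_inv := fun _ => rfl
      right_inv := fun _ => rfl }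
  map_app' x := by simp [QuadraticMap.prod_apply]; ring

/-- `(Q₁ ⊥ Q₂) ⊥ (Q₃ ⊥ Q₄) ≅ (Q₃ ⊥ Q₁) ⊥ (Q₄ ⊥ Q₂)` -/
def shuffleIsoB (Q₁ : QuadraticForm R M₁) (Q₂ : QuadraticForm R M₂) (Q₃ : QuadraticForm R M₃)
    (Q₄ : QuadraticForm R M₄) :
    ((Q₁.prod Q₂).prod (Q₃.prod Q₄)).IsometryEquiv ((Q₃.prod Q₁).prod (Q₄.prod Q₂)) where
  toLinearEquiv :=
    { toFun := fun x => ((x.2.1, x.1.1), (x.2.2, x.1.2))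
      invFun := fun y => ((y.1.2, y.2.2), (y.1.1, y.2.1))
      map_add' := fun _ _ => rfl
      map_smul' := fun _ _ => rfl
      left_inv := fun _ => rfl
      right_inv := fun _ => rfl }
  map_app' x := by simp [QuadraticMap.prod_apply]; ring

variable {K : Type u} [Field K]

/-- In characteristic 2, `[1,c] ≅ [1,c²]`. -/
def binIso (h2 : (2 : K) = 0) (c : K) :
    (binQF K 1 c).IsometryEquiv (binQF K 1 (c ^ 2)) where
  toLinearEquiv :=
    { toFun := fun z => (z.1 + c * z.2, z.2)
      invFun := fun z => (z.1 - c * z.2, z.2)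
      map_add' := fun a b => by ext <;> simp <;> ring
      map_smul' := fun a z => by ext <;> simp <;> ring
      left_inv := fun z => by ext <;> simp
      right_inv := fun z => by ext <;> simp }
  map_app' z := by
    simp only [binQF_apply]
    linear_combination (c * z.1 * z.2 + c ^ 2 * z.2 * z.2) * h2

/-- In characteristic 2, `H ⊥ H ≅ [1,d] ⊥ [1,d]`. -/
def doubleHypIso (h2 : (2 : K) = 0) (d : K) :
    ((binQF K 0 0).prod (binQF K 0 0)).IsometryEquiv
      ((binQF K 1 d).prod (binQF K 1 d)) where
  toLinearEquiv :=
    { toFun := fun z => ((z.1.1 + d * z.1.2, z.1.2 + z.2.1 + z.2.2),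
        (z.1.1 + d * z.1.2 + z.2.2, z.2.1 + z.2.2))
      invFun := fun z => ((z.1.1 - d * z.1.2 + d * z.2.2, z.1.2 - z.2.2),
        (z.1.1 - z.2.1 + z.2.2, z.2.1 - z.1.1))
      map_add' := fun a b => by ext <;> simp <;> ring
      map_smul' := fun a z => by ext <;> simp <;> ring
      left_inv := fun z => by ext <;> simp <;> ring
      right_inv := fun z => by ext <;> simp <;> ring }
  map_app' z := by
    obtain ⟨⟨x1, y1⟩, x2, y2⟩ := z
    simp only [QuadraticMap.prod_apply, binQF_apply]
    linear_combination (x1 ^ 2 + 2 * d * x1 * y1 + d ^ 2 * y1 ^ 2 + x1 * x2 + 2 * x1 * y2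
      + d * y1 ^ 2 + 2 * d * y1 * x2 + 3 * d * y1 * y2 + d * x2 ^ 2 + 2 * d * x2 * y2
      + d * y2 ^ 2 + y2 ^ 2) * h2

/-- the target building block `ψ ⊥ w·ψ` with `ψ = [1,d]` (as a one-element `pi`). -/
def Blk (w d : K) : QuadraticForm K ((Fin 1 → K × K) × (Fin 1 → K × K)) :=
  (QuadraticMap.pi fun _ : Fin 1 => binQF K 1 d).prod
    (w • QuadraticMap.pi fun _ : Fin 1 => binQF K 1 d)

/-- core step: `λ·⟨⟨u,c]] ⊥ H ⊥ H ≅ ([1,c²] ⊥ λ[1,c²]) ⊥ ([1,c²] ⊥ λu[1,c²])`. -/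
theorem coreEquiv (h2 : (2 : K) = 0) (l u c : K) :
    ((l • pf2 K u c).prod ((binQF K 0 0).prod (binQF K 0 0))).Equivalent
      ((Blk l (c ^ 2)).prod (Blk (l * u) (c ^ 2))) := by
  have e0 : l • pf2 K u c = (l • binQF K 1 c).prod ((l * u) • binQF K 1 c) := by
    rw [pf2, smul_prod, smul_smul]
  refine (Equivalent.prod (equivalent_of_eq e0) (Equivalent.refl _)).trans ?_
  refine (Equivalent.prod
    (Equivalent.prod ⟨smulIso l (binIso h2 c)⟩ ⟨smulIso (l * u) (binIso h2 c)⟩)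
    ⟨doubleHypIso h2 (c ^ 2)⟩).trans ?_
  refine Equivalent.trans (⟨shuffleIsoB _ _ _ _⟩ : Equivalent _ _) ?_
  exact Equivalent.prod
    (Equivalent.prod ⟨oneIso _⟩ ⟨smulIso l (oneIso _)⟩)
    (Equivalent.prod ⟨oneIso _⟩ ⟨smulIso (l * u) (oneIso _)⟩)

theorem mainEquiv (h2 : (2 : K) = 0) :
    ∀ (n : ℕ) (lam uu c : Fin n → K), (∀ k, lam k ≠ 0) → (∀ k, uu k ≠ 0) →
    ∃ w d : Fin (2 * n) → K, (∀ j, w j ≠ 0) ∧ (∀ j, ∃ z : K, d j = z ^ 2) ∧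
      ((QuadraticMap.pi fun k => lam k • pf2 K (uu k) (c k)).prod (hyps K (2 * n))).Equivalent
        (QuadraticMap.pi fun j => Blk (w j) (d j)) := by
  intro n
  induction n with
  | zero =>
    intro lam uu c _ _
    haveI : IsEmpty (Fin (2 * 0)) := ⟨fun j => j.elim0⟩
    exact ⟨Fin.elim0, Fin.elim0, fun j => j.elim0, fun j => j.elim0,
      ⟨subsingletonIso _ _⟩⟩
  | succ n ih =>
    intro lam uu c hlam hu
    obtain ⟨w', d', hw', hd', E'⟩ := ih (fun k => lam k.succ) (fun k => uu k.succ)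
      (fun k => c k.succ) (fun k => hlam k.succ) (fun k => hu k.succ)
    refine ⟨Fin.cons (lam 0) (Fin.cons (lam 0 * uu 0) w'),
      Fin.cons ((c 0) ^ 2) (Fin.cons ((c 0) ^ 2) d'), ?_, ?_, ?_⟩
    · intro j
      refine Fin.cases ?_ (fun i => ?_) j
      · simpa using hlam 0
      · refine Fin.cases ?_ (fun i' => ?_) i
        · simpa using mul_ne_zero (hlam 0) (hu 0)
        · simpa using hw' i'
    · intro j
      refine Fin.cases ?_ (fun i => ?_) j
      · exact ⟨c 0, by simp⟩
      · refine Fin.cases ?_ (fun i' => ?_) i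
        · exact ⟨c 0, by simp⟩
        · simpa using hd' i'
    · have Et : (QuadraticMap.pi fun j : Fin (2 * (n + 1)) =>
          Blk ((Fin.cons (lam 0) (Fin.cons (lam 0 * uu 0) w') : Fin (2 * (n+1)) → K) j)
            ((Fin.cons ((c 0) ^ 2) (Fin.cons ((c 0) ^ 2) d') : Fin (2 * (n+1)) → K) j)).Equivalent
          ((Blk (lam 0) ((c 0) ^ 2)).prod ((Blk (lam 0 * uu 0) ((c 0) ^ 2)).prod
            (QuadraticMap.pi fun i : Fin (2 * n) => Blk (w' i) (d' i)))) := by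
        refine Equivalent.trans (⟨consIso _⟩ : Equivalent _ _) ?_
        simp only [Fin.cons_zero, Fin.cons_succ]
        exact Equivalent.prod (Equivalent.refl _)
          (Equivalent.trans (⟨consIso _⟩ : Equivalent _ _)
            (by simp only [Fin.cons_zero, Fin.cons_succ]; exact Equivalent.refl _))
      refine Equivalent.trans ?_ Et.symm
      refine (Equivalent.prod (⟨consIso _⟩ : Equivalent _ _)
        (Equivalent.trans (⟨consIso (fun _ : Fin (2 * n + 1 + 1) => binQF K 0 0)⟩ : Equivalent _ _)
          (Equivalent.prod (Equivalent.refl _)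
            (⟨consIso (fun _ : Fin (2 * n + 1) => binQF K 0 0)⟩ : Equivalent _ _)))).trans ?_
      refine Equivalent.trans (⟨shuffleIsoA _ _ _ _ _⟩ : Equivalent _ _) ?_
      refine (Equivalent.prod (coreEquiv h2 (lam 0) (uu 0) (c 0)) E').trans ?_
      exact ⟨assocIso _ _ _⟩

end Stmt17Aux

/-- For a purely inseparable quadratic extension `K/F` in characteristic 2,
`I²_q K = IK ⊗ I_q F`: every class of `I²_q K` (represented by a sum of scaled quadratic
2-fold Pfister forms `⊥ᵢ λᵢ⟨⟨uᵢ, cᵢ]]`) is Witt equivalent to a sum of forms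
`⟨1, wⱼ⟩_b ⊗ ψⱼ = ψⱼ ⊥ wⱼ·ψⱼ` with `wⱼ ∈ K^×` and `ψⱼ` a nonsingular quadratic form
defined over `F` (i.e. a sum of binary forms `[aᵢ, bᵢ]` with coefficients in `F`). -/

theorem stmt_17 (F K : Type u) [Field F] [Field K] [Algebra F K] [CharP F 2]
    (hins : ∀ z : K, z ^ 2 ∈ (algebraMap F K).range) (hdeg : Module.finrank F K = 2)
    (n : ℕ) (lam uu : Fin n → K) (hlam : ∀ k, lam k ≠ 0) (hu : ∀ k, uu k ≠ 0)
    (c : Fin n → K) :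
    ∃ (m : ℕ) (w : Fin m → K) (N : Fin m → ℕ)
      (aa bb : (j : Fin m) → Fin (N j) → F),
      (∀ j, w j ≠ 0) ∧
      WittEq K (QuadraticMap.pi fun k : Fin n => lam k • pf2 K (uu k) (c k))
        (QuadraticMap.pi fun j : Fin m =>
          (QuadraticMap.pi fun p : Fin (N j) =>
            binQF K (algebraMap F K (aa j p)) (algebraMap F K (bb j p))).prod
          (w j • QuadraticMap.pi fun p : Fin (N j) =>
            binQF K (algebraMap F K (aa j p)) (algebraMap F K (bb j p)))) := by
  classical
  have h2 : (2 : K) = 0 := by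
    haveI := charP_of_injective_algebraMap (algebraMap F K).injective 2
    exact_mod_cast CharP.cast_eq_zero K 2
  obtain ⟨w, d, hw, hd, E⟩ := mainEquiv h2 n lam uu c hlam hu
  choose z hz using hd
  choose bb hbb using fun j => hins (z j)
  refine ⟨2 * n, w, fun _ => 1, fun _ _ => 1, fun j _ => bb j, hw, 2 * n, 0, ?_⟩
  have hform : ∀ j : Fin (2 * n),
      (QuadraticMap.pi fun _ : Fin 1 =>
        binQF K (algebraMap F K 1) (algebraMap F K (bb j))) =
      QuadraticMap.pi fun _ : Fin 1 => binQF K 1 (d j) := by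
    intro j
    rw [map_one, hbb j, ← hz j]
  refine E.trans ?_
  have : (QuadraticMap.pi fun j : Fin (2 * n) => Blk (w j) (d j)) =
      QuadraticMap.pi fun j : Fin (2 * n) =>
        (QuadraticMap.pi fun _ : Fin 1 =>
          binQF K (algebraMap F K 1) (algebraMap F K (bb j))).prod
        (w j • QuadraticMap.pi fun _ : Fin 1 =>
          binQF K (algebraMap F K 1) (algebraMap F K (bb j))) := by
    congr 1
    funext j
    rw [hform j, Blk]
  rw [this]
  exact ⟨prodEmptyIso _ _⟩
end

section
/- Let F be a field of characteristic 2, K = F(√b) with b ∈ F^× a nonsquare, and s : K → F the F-linear functional with s(1) = 0 and s(√b) = 1. For z = x ∈ F^× ⊆ K^× (i.e., z with zero √b-component), the transfer s_*(⟨z⟩_b) of the 1-dimensional bilinear form ⟨z⟩_b over K is a metabolic (hence Witt-trivial) symmetric bilinear form over F. -/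
open scoped TensorProduct

universe u

/-- For `K = F(√b)`, `s(1) = 0`, `s(√b) = 1` and `z = x ∈ F^×`, the
transfer `s_*(⟨z⟩_b)`, i.e. the `F`-bilinear form `(u,v) ↦ s(zuv)` on `K`, is metabolic:
it admits a Lagrangian, a submodule `N` equal to its own orthogonal complement. -/
theorem stmt_19 (F K : Type u) [Field F] [Field K] [Algebra F K] [CharP F 2]
    (b : F) (hbns : ∀ u : F, u ^ 2 ≠ b) (β : K) (hβ : β ^ 2 = algebraMap F K b)
    (hspan : ∀ w : K, ∃ u v : F, w = algebraMap F K u + algebraMap F K v * β)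
    (s : K →ₗ[F] F) (hs1 : s 1 = 0) (hsβ : s β = 1)
    (x : F) (hx : x ≠ 0) :
    ∃ N : Submodule F K,
      (∀ u ∈ N, ∀ v ∈ N, s (algebraMap F K x * u * v) = 0) ∧
      (∀ v : K, (∀ u ∈ N, s (algebraMap F K x * u * v) = 0) → v ∈ N) := by
  refine ⟨Submodule.span F {1}, ?_, ?_⟩
  · intro u hu v hv
    rw [Submodule.mem_span_singleton] at hu hv
    obtain ⟨a, rfl⟩ := hu
    obtain ⟨c, rfl⟩ := hv
    have : algebraMap F K x * (a • (1:K)) * (c • (1:K)) = (x * a * c) • (1:K) := by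
      simp [Algebra.smul_def, mul_comm, mul_assoc, mul_left_comm]
    rw [this, map_smul, hs1, smul_zero]
  · intro v h
    have h1 := h 1 (Submodule.mem_span_singleton_self 1)
    rw [mul_one, ← Algebra.smul_def, map_smul, smul_eq_mul] at h1
    have hsv : s v = 0 := by
      rcases mul_eq_zero.mp h1 with h' | h'
      · exact absurd h' hx
      · exact h'
    obtain ⟨a, c, rfl⟩ := hspan v
    rw [map_add, ← Algebra.smul_def, Algebra.algebraMap_eq_smul_one, map_smul, map_smul,
      hs1, hsβ, smul_zero, smul_eq_mul, mul_one, zero_add] at hsv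
    rw [hsv, map_zero, zero_mul, add_zero]
    rw [Submodule.mem_span_singleton]
    exact ⟨a, by simp [Algebra.smul_def]⟩
end
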